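/- arXiv:1202.5772 — 2 statements merged into one kernel-verified Lean document; each statement's English description precedes it below -/
import Mathlib

section
/- Let G be a finite abelian group of even order 2m with a unique element z of order 2, and let U = {1, z}. Then for every x in G, V_{G→U}(x) = x^m, and x is a square in G if and only if V_{G→U}(x) = 1. -/
section Helpers
open Subgroup MonoidHom

variable {G : Type*} [CommGroup G] [Finite G]

lemma ker_sq_eq {z : G} (hz : orderOf z = 2) (hzuniq : ∀ y : G, orderOf y = 2 → y = z) :
    (powMonoidHom 2 : G →* G).ker = Subgroup.zpowers z := by
  ext y
  simp only [MonoidHom.mem_ker, powMonoidHom_apply]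
  constructor
  · intro h
    rcases eq_or_ne y 1 with rfl | hy
    · exact one_mem _
    · have : orderOf y = 2 := by
        have h1 : orderOf y ∣ 2 := orderOf_dvd_of_pow_eq_one h
        rcases (Nat.dvd_prime Nat.prime_two).mp h1 with h' | h'
        · exact absurd (orderOf_eq_one_iff.mp h') hy
        · exact h'
      rw [hzuniq y this]; exact mem_zpowers z
  · intro h
    obtain ⟨n, rfl⟩ := mem_zpowers_iff.mp h
    have : z ^ 2 = 1 := by rw [← hz]; exact pow_orderOf_eq_one z
    rw [← zpow_natCast, ← zpow_mul, mul_comm, zpow_mul, zpow_natCast, this, one_zpow]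

lemma card_ker_pow_le {z : G} (hz : orderOf z = 2) (hzuniq : ∀ y : G, orderOf y = 2 → y = z) :
    ∀ j : ℕ, Nat.card ((powMonoidHom (2 ^ j) : G →* G).ker) ≤ 2 ^ j := by
  intro j
  induction j with
  | zero =>
    have : (powMonoidHom (2 ^ 0) : G →* G).ker = ⊥ := by
      ext y; simp [MonoidHom.mem_ker]
    rw [this]; simp
  | succ j ih =>
    set K : Subgroup G := (powMonoidHom (2 ^ j) : G →* G).ker with hK
    set K' : Subgroup G := (powMonoidHom (2 ^ (j+1)) : G →* G).ker with hK'
    have hmem : ∀ t : K', ((powMonoidHom 2 : G →* G).domRestrict K') t ∈ K := by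
      intro t
      simp only [MonoidHom.restrict_apply, powMonoidHom_apply, hK, MonoidHom.mem_ker,
        ← pow_mul]
      have := t.2
      simp only [hK', MonoidHom.mem_ker, powMonoidHom_apply] at this
      rw [show 2 * 2 ^ j = 2 ^ (j+1) by ring]
      exact this
    set f : K' →* K := ((powMonoidHom 2 : G →* G).domRestrict K').codRestrict K hmem with hf
    have hcard : Nat.card K' = Nat.card (K' ⧸ f.ker) * Nat.card f.ker :=
      Subgroup.card_eq_card_quotient_mul_card_subgroup f.ker
    have h1 : Nat.card (K' ⧸ f.ker) ≤ 2 ^ j := by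
      rw [Nat.card_congr (QuotientGroup.quotientKerEquivRange f).toEquiv]
      exact le_trans (Nat.card_le_card_of_injective _ Subtype.val_injective) ih
    have h2 : Nat.card f.ker ≤ 2 := by
      have : Nat.card (Subgroup.zpowers z) = 2 := by rw [Nat.card_zpowers, hz]
      rw [← this]
      refine Nat.card_le_card_of_injective
        (fun t => (⟨(t : G), ?_⟩ : Subgroup.zpowers z)) ?_
      · have ht := t.2
        simp only [hf, MonoidHom.mem_ker, MonoidHom.codRestrict_apply] at ht
        have ht' : ((t : K') : G) ^ 2 = 1 := by
          have := congrArg (Subtype.val : K → G) ht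
          simpa [MonoidHom.restrict_apply, powMonoidHom_apply] using this
        rw [← ker_sq_eq hz hzuniq]
        simpa [MonoidHom.mem_ker, powMonoidHom_apply] using ht'
      · intro a b hab
        simp only [Subtype.mk_eq_mk] at hab
        exact Subtype.ext (Subtype.ext hab)
    calc Nat.card K' = Nat.card (K' ⧸ f.ker) * Nat.card f.ker := hcard
      _ ≤ 2 ^ j * 2 := Nat.mul_le_mul h1 h2
      _ = 2 ^ (j+1) := by ring

lemma exists_pow_m_ne_one {z : G} (m : ℕ) (hcard : Nat.card G = 2 * m)
    (hz : orderOf z = 2) (hzuniq : ∀ y : G, orderOf y = 2 → y = z) :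
    ∃ g : G, g ^ m ≠ 1 := by
  by_contra hall
  push_neg at hall
  have hG0 : Nat.card G ≠ 0 := Nat.card_pos.ne'
  haveI : Fact (Nat.Prime 2) := ⟨Nat.prime_two⟩
  set k : ℕ := (Nat.card G).factorization 2 with hk
  have hk1 : 1 ≤ k := by
    have h2 : 2 ∣ Nat.card G := ⟨m, hcard⟩
    exact (Nat.Prime.factorization_pos_of_dvd Nat.prime_two hG0 h2)
  obtain ⟨P⟩ : Nonempty (Sylow 2 G) := inferInstance
  have hP : Nat.card P = 2 ^ k := P.card_eq_multiplicity
  have key : ∀ x : (P : Subgroup G), (x : G) ^ (2 ^ (k - 1)) = 1 := by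
    intro x
    have h1 : orderOf (x : G) ∣ 2 ^ k := by
      rw [Subgroup.orderOf_coe, ← hP]; exact orderOf_dvd_natCard x
    have h2 : orderOf (x : G) ∣ m := orderOf_dvd_of_pow_eq_one (hall _)
    obtain ⟨j, hj, hd⟩ := (Nat.dvd_prime_pow Nat.prime_two).mp h1
    have hjk : j ≤ k - 1 := by
      by_contra hjk
      have hjeq : j = k := by omega
      rw [hjeq] at hd
      have : 2 ^ (k + 1) ∣ Nat.card G := by
        rw [hd] at h2
        rw [hcard, pow_succ, mul_comm (2 ^ k) 2]
        exact Nat.mul_dvd_mul dvd_rfl h2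
      have := (Nat.Prime.pow_dvd_iff_le_factorization Nat.prime_two hG0).mp this
      omega
    apply orderOf_dvd_iff_pow_eq_one.mp
    rw [hd]
    exact pow_dvd_pow 2 hjk
  have hinj : Nat.card (P : Subgroup G) ≤
      Nat.card ((powMonoidHom (2 ^ (k - 1)) : G →* G).ker) := by
    refine Nat.card_le_card_of_injective
      (fun x => (⟨(x : G), by simp [MonoidHom.mem_ker, powMonoidHom_apply, key x]⟩ :
        ((powMonoidHom (2 ^ (k - 1)) : G →* G).ker))) ?_
    intro a b hab
    simp only [Subtype.mk_eq_mk] at hab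
    exact Subtype.ext hab
  have := le_trans hinj (card_ker_pow_le hz hzuniq (k - 1))
  rw [hP] at this
  have hlt : 2 ^ (k - 1) < 2 ^ k := Nat.pow_lt_pow_right (by norm_num) (by omega)
  omega

end Helpers

theorem transfer_to_order_two_subgroup {G : Type*} [CommGroup G] [Finite G]
    (m : ℕ) (hcard : Nat.card G = 2 * m)
    (z : G) (hz : orderOf z = 2) (hzuniq : ∀ y : G, orderOf y = 2 → y = z)
    (x : G) :
    ((MonoidHom.transfer (MonoidHom.id (Subgroup.zpowers z)) x : Subgroup.zpowers z) : G)
        = x ^ m ∧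
    ((∃ y : G, y ^ 2 = x) ↔ MonoidHom.transfer (MonoidHom.id (Subgroup.zpowers z)) x = 1) := by
  set H := Subgroup.zpowers z with hH
  have hcardH : Nat.card H = 2 := by rw [hH, Nat.card_zpowers, hz]
  have hindex : H.index = m := by
    have h1 := Subgroup.card_mul_index H
    rw [hcardH, hcard] at h1
    omega
  have key : ∀ (k : ℕ) (g₀ : G), g₀⁻¹ * x ^ k * g₀ ∈ H → g₀⁻¹ * x ^ k * g₀ = x ^ k := by
    intro k g₀ _
    rw [mul_comm g₀⁻¹, mul_assoc, inv_mul_cancel, mul_one]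
  have ht := MonoidHom.transfer_eq_pow (MonoidHom.id H) x key
  have hcoe : ((MonoidHom.transfer (MonoidHom.id H) x : H) : G) = x ^ m := by
    rw [ht, MonoidHom.id_apply]
    show x ^ H.index = x ^ m
    rw [hindex]
  refine ⟨hcoe, ?_⟩
  have hiff1 : MonoidHom.transfer (MonoidHom.id H) x = 1 ↔ x ^ m = 1 := by
    rw [← OneMemClass.coe_eq_one, hcoe]
  rw [hiff1]
  constructor
  · rintro ⟨y, rfl⟩
    rw [← pow_mul, ← hcard]
    exact pow_card_eq_one'
  · intro hxm
    set f := (powMonoidHom 2 : G →* G) with hfdef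
    have hker : f.ker = Subgroup.zpowers z := ker_sq_eq hz hzuniq
    have hkcard : Nat.card f.ker = 2 := by rw [hker, Nat.card_zpowers, hz]
    have hrange : Nat.card f.range = m := by
      have h1 : Nat.card G = Nat.card (G ⧸ f.ker) * Nat.card f.ker :=
        Subgroup.card_eq_card_quotient_mul_card_subgroup f.ker
      have h2 : Nat.card (G ⧸ f.ker) = Nat.card f.range :=
        Nat.card_congr (QuotientGroup.quotientKerEquivRange f).toEquiv
      rw [hcard, h2, hkcard] at h1
      omega
    set K := (powMonoidHom m : G →* G).ker with hKdef
    have hle : f.range ≤ K := by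
      rintro _ ⟨y, rfl⟩
      simp only [hKdef, MonoidHom.mem_ker, hfdef, powMonoidHom_apply, ← pow_mul, ← hcard]
      exact pow_card_eq_one'
    have hm0 : 0 < m := by
      have := Nat.card_pos (α := G)
      omega
    have hKle : Nat.card K ≤ m := by
      obtain ⟨g, hg⟩ := exists_pow_m_ne_one m hcard hz hzuniq
      have hne : Nat.card K ≠ 2 * m := by
        intro h
        apply hg
        have hK : K = ⊤ := Subgroup.eq_top_of_card_eq K (by rw [h, hcard])
        have : g ∈ K := hK ▸ Subgroup.mem_top g
        simpa [hKdef, MonoidHom.mem_ker, powMonoidHom_apply] using this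
      have hdvd : Nat.card K ∣ 2 * m := hcard ▸ Subgroup.card_subgroup_dvd_card K
      obtain ⟨c, hc⟩ := hdvd
      by_contra hlt
      push_neg at hlt
      rcases c with _ | c
      · omega
      rcases c with _ | c
      · omega
      · nlinarith
    have heq : f.range = K := Subgroup.eq_of_le_of_card_ge hle (by rw [hrange]; exact hKle)
    have hx : x ∈ K := by
      simpa [hKdef, MonoidHom.mem_ker, powMonoidHom_apply] using hxm
    rw [← heq] at hx
    obtain ⟨y, hy⟩ := hx
    exact ⟨y, hy⟩
end

section
/- Euler's version of quadratic reciprocity: if d is a nonzero integer and p, q are odd primes not dividing d with p ≡ q mod 4d, then d is a quadratic residue mod p if and only if d is a quadratic residue mod q. -/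
theorem euler_version_quadratic_reciprocity (d : ℤ) (hd : d ≠ 0)
    (p q : ℕ) (hp : p.Prime) (hq : q.Prime) (hp2 : p ≠ 2) (hq2 : q ≠ 2)
    (hpd : ¬ (p : ℤ) ∣ d) (hqd : ¬ (q : ℤ) ∣ d)
    (hcong : (p : ℤ) % (4 * |d|) = (q : ℤ) % (4 * |d|)) :
    IsSquare (d : ZMod p) ↔ IsSquare (d : ZMod q) := by
  haveI : Fact p.Prime := ⟨hp⟩
  haveI : Fact q.Prime := ⟨hq⟩
  have hp0 : (d : ZMod p) ≠ 0 := by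
    rwa [Ne, ZMod.intCast_zmod_eq_zero_iff_dvd]
  have hq0 : (d : ZMod q) ≠ 0 := by
    rwa [Ne, ZMod.intCast_zmod_eq_zero_iff_dvd]
  have hop : Odd p := hp.odd_of_ne_two hp2
  have hoq : Odd q := hq.odd_of_ne_two hq2
  have hn : p % (4 * d.natAbs) = q % (4 * d.natAbs) := by
    have h4 : ((4 * d.natAbs : ℕ) : ℤ) = 4 * |d| := by
      rw [Int.abs_eq_natAbs]; push_cast; ring
    have h := hcong
    rw [← h4] at h
    exact_mod_cast h
  have hJ : jacobiSym d p = jacobiSym d q := by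
    rw [jacobiSym.mod_right d hop, jacobiSym.mod_right d hoq, hn]
  rw [← legendreSym.eq_one_iff p hp0, ← legendreSym.eq_one_iff q hq0,
    jacobiSym.legendreSym.to_jacobiSym, jacobiSym.legendreSym.to_jacobiSym, hJ]
end
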